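/- Fix an integer m ≥ 1. Let α_{nk} (n, k ≥ 1) be a doubly indexed family of reals (α_{nk} = log a_{nk} for an infinite matrix A of geometric real numbers), and define b_{ik} = (1/i) · (Δ^{m-1}α_{1k} − Δ^{m-1}α_{(i+1)k}), where Δ^{m-1}α_{nk} = ∑_{v=0}^{m-1} (−1)^v · binom(m-1,v) · α_{(n+v)k}. Then the following are equivalent: (I) for every bounded real sequence t, the series A_n(t) = ∑_{k=1}^∞ α_{nk} t_k converges for each n and the sequence i ↦ |(1/i) ∑_{n=1}^i Δ^m A_n(t)| is bounded; (II) (i) ∑_{k=1}^∞ |α_{nk}| < ∞ for each n, and (ii) for every bounded real sequence t, the series B_i(t) = ∑_{k=1}^∞ b_{ik} t_k converges for each i and the sequence i ↦ |B_i(t)| is bounded. (In the paper's notation: A ∈ (ℓ_∞^G, C_∞^G(Δ_G^m)) if and only if the rows of A are in ℓ_1^G and B ∈ (ℓ_∞^G, ℓ_∞^G).) -/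

import Mathlib

/-- Classical `m`-th order forward difference
`Δ^m y_k = ∑_{v=0}^m (−1)^v C(m,v) y_{k+v}`. -/
noncomputable def fdiff (m : ℕ) (y : ℕ → ℝ) (k : ℕ) : ℝ :=
  ∑ v ∈ Finset.range (m + 1), (-1 : ℝ) ^ v * (m.choose v : ℝ) * y (k + v)

/-- The associated matrix
`b_{ik} = (1/i)·(Δ^{m-1}α_{1k} − Δ^{m-1}α_{(i+1)k})`, where `Δ^{m-1}` acts on
the row index. -/
noncomputable def bmat (m : ℕ) (α : ℕ → ℕ → ℝ) (i k : ℕ) : ℝ :=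
  (1 / (i : ℝ)) *
    (fdiff (m - 1) (fun n => α n k) 1 - fdiff (m - 1) (fun n => α n k) (i + 1))

lemma fdiff_succ (m : ℕ) (y : ℕ → ℝ) (k : ℕ) :
    fdiff (m+1) y k = fdiff m y k - fdiff m y (k+1) := by
  unfold fdiff
  rw [Finset.sum_range_succ' (fun v => (-1 : ℝ) ^ v * ((m+1).choose v : ℝ) * y (k + v)) (m+1),
      Finset.sum_range_succ' (fun v => (-1 : ℝ) ^ v * (m.choose v : ℝ) * y (k + v)) m]
  have h1 : ∑ v ∈ Finset.range (m+1), (-1:ℝ)^(v+1) * (((m+1).choose (v+1) : ℕ) : ℝ) * y (k+(v+1))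
      = (∑ v ∈ Finset.range (m+1), (-1:ℝ)^(v+1) * (m.choose v : ℝ) * y (k+(v+1)))
        + ∑ v ∈ Finset.range (m+1), (-1:ℝ)^(v+1) * (m.choose (v+1) : ℝ) * y (k+(v+1)) := by
    rw [← Finset.sum_add_distrib]
    refine Finset.sum_congr rfl fun v _ => ?_
    rw [Nat.choose_succ_succ]
    push_cast; ring
  have h2 : ∑ v ∈ Finset.range (m+1), (-1:ℝ)^(v+1) * (m.choose (v+1) : ℝ) * y (k+(v+1))
      = ∑ v ∈ Finset.range m, (-1:ℝ)^(v+1) * (m.choose (v+1) : ℝ) * y (k+(v+1)) := by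
    rw [Finset.sum_range_succ, Nat.choose_succ_self]; simp
  have h3 : ∑ v ∈ Finset.range (m+1), (-1:ℝ)^(v+1) * (m.choose v : ℝ) * y (k+(v+1))
      = - ∑ v ∈ Finset.range (m+1), (-1:ℝ)^v * (m.choose v : ℝ) * y (k+1+v) := by
    rw [← Finset.sum_neg_distrib]
    refine Finset.sum_congr rfl fun v _ => ?_
    have hk : k+(v+1) = k+1+v := by omega
    rw [hk]; ring
  rw [h1, h2, h3]
  simp
  ring

lemma sum_fdiff_telescope (m i : ℕ) (y : ℕ → ℝ) :
    ∑ n ∈ Finset.Icc 1 i, fdiff (m+1) y n = fdiff m y 1 - fdiff m y (i+1) := by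
  induction i with
  | zero => simp
  | succ j ih =>
      rw [Finset.sum_Icc_succ_top (by omega : 1 ≤ j + 1), ih, fdiff_succ]
      ring

/-- Summability of a finite-difference row against a summable family. -/
lemma summable_fdiff_row (m : ℕ) (α : ℕ → ℕ → ℝ) (t : ℕ → ℝ)
    (hs : ∀ n, 1 ≤ n → Summable (fun k => α n (k+1) * t (k+1))) (j : ℕ) (hj : 1 ≤ j) :
    Summable (fun k => fdiff m (fun n => α n (k+1)) j * t (k+1)) := by
  have : ∀ k, fdiff m (fun n => α n (k+1)) j * t (k+1)
      = ∑ v ∈ Finset.range (m+1), (-1:ℝ)^v * (m.choose v : ℝ) * (α (j+v) (k+1) * t (k+1)) := by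
    intro k
    rw [fdiff, Finset.sum_mul]
    exact Finset.sum_congr rfl fun v _ => by ring
  rw [show (fun k => fdiff m (fun n => α n (k+1)) j * t (k+1)) = fun k =>
      ∑ v ∈ Finset.range (m+1), (-1:ℝ)^v * (m.choose v : ℝ) * (α (j+v) (k+1) * t (k+1))
      from funext this]
  exact summable_sum fun v _ => ((hs (j+v) (by omega)).mul_left _)

lemma fdiff_tsum (m : ℕ) (α : ℕ → ℕ → ℝ) (t : ℕ → ℝ)
    (hs : ∀ n, 1 ≤ n → Summable (fun k => α n (k+1) * t (k+1))) (j : ℕ) (hj : 1 ≤ j) :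
    fdiff m (fun n => ∑' k : ℕ, α n (k+1) * t (k+1)) j
      = ∑' k : ℕ, fdiff m (fun n => α n (k+1)) j * t (k+1) := by
  have hR : (fun k => fdiff m (fun n => α n (k+1)) j * t (k+1)) = fun k =>
      ∑ v ∈ Finset.range (m+1), ((-1:ℝ)^v * (m.choose v : ℝ)) * (α (j+v) (k+1) * t (k+1)) := by
    funext k
    rw [fdiff, Finset.sum_mul]
    exact Finset.sum_congr rfl fun v _ => by ring
  rw [hR, Summable.tsum_finsetSum (fun v _ => ((hs (j+v) (by omega)).mul_left _))]
  rw [fdiff]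
  exact Finset.sum_congr rfl fun v _ => by rw [tsum_mul_left, mul_assoc]

lemma summable_bmat_row (m : ℕ) (α : ℕ → ℕ → ℝ) (t : ℕ → ℝ)
    (hs : ∀ n, 1 ≤ n → Summable (fun k => α n (k+1) * t (k+1))) (i : ℕ) :
    Summable (fun k => bmat (m+1) α i (k+1) * t (k+1)) := by
  have h1 := summable_fdiff_row m α t hs 1 le_rfl
  have h2 := summable_fdiff_row m α t hs (i+1) (by omega)
  refine ((h1.sub h2).mul_left (1/(i:ℝ))).congr fun k => ?_
  rw [bmat]; simp only [Nat.add_sub_cancel]; ring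

/-- The key identity: the `B`-transform equals the Cesàro mean of the
`m`-th differences of the `A`-transform. -/
lemma key_identity (m : ℕ) (α : ℕ → ℕ → ℝ) (t : ℕ → ℝ)
    (hs : ∀ n, 1 ≤ n → Summable (fun k => α n (k+1) * t (k+1))) (i : ℕ) :
    ∑' k : ℕ, bmat (m+1) α i (k+1) * t (k+1)
      = (1/(i:ℝ)) * ∑ n ∈ Finset.Icc 1 i,
          fdiff (m+1) (fun j => ∑' k : ℕ, α j (k+1) * t (k+1)) n := by
  rw [sum_fdiff_telescope, fdiff_tsum m α t hs 1 le_rfl, fdiff_tsum m α t hs (i+1) (by omega)]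
  rw [← Summable.tsum_sub (summable_fdiff_row m α t hs 1 le_rfl)
        (summable_fdiff_row m α t hs (i+1) (by omega)), ← tsum_mul_left]
  refine tsum_congr fun k => ?_
  rw [bmat]; simp only [Nat.add_sub_cancel]; ring

lemma summable_mul_bounded (f t : ℕ → ℝ) (C : ℝ) (hf : Summable (fun k => |f k|))
    (ht : ∀ k, |t k| ≤ C) : Summable (fun k => f k * t k) := by
  refine Summable.of_norm_bounded (hf.mul_right C) fun k => ?_
  rw [Real.norm_eq_abs, abs_mul]
  exact mul_le_mul_of_nonneg_left (ht k) (abs_nonneg _)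

/-- `A ∈ (ℓ_∞^G, C_∞^G(Δ_G^m))` iff the rows of `A` are in
`ℓ_1^G` and `B ∈ (ℓ_∞^G, ℓ_∞^G)`, stated after taking logarithms
(`α_{nk} = log a_{nk}`, `t_k = log x_k`). -/
theorem matrix_linf_to_CinfG (m : ℕ) (hm : 1 ≤ m) (α : ℕ → ℕ → ℝ) :
    (∀ t : ℕ → ℝ, (∃ C : ℝ, ∀ k, |t k| ≤ C) →
        (∀ n, 1 ≤ n → Summable (fun k : ℕ => α n (k + 1) * t (k + 1))) ∧
        ∃ M : ℝ, ∀ i : ℕ,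
          |(1 / (i : ℝ)) * ∑ n ∈ Finset.Icc 1 i,
              fdiff m (fun j => ∑' k : ℕ, α j (k + 1) * t (k + 1)) n| ≤ M) ↔
      ((∀ n, 1 ≤ n → Summable (fun k : ℕ => |α n (k + 1)|)) ∧
        ∀ t : ℕ → ℝ, (∃ C : ℝ, ∀ k, |t k| ≤ C) →
          (∀ i, 1 ≤ i → Summable (fun k : ℕ => bmat m α i (k + 1) * t (k + 1))) ∧
          ∃ M : ℝ, ∀ i : ℕ,
            |∑' k : ℕ, bmat m α (i + 1) (k + 1) * t (k + 1)| ≤ M) := by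
  obtain ⟨m', rfl⟩ : ∃ m', m = m' + 1 := ⟨m - 1, by omega⟩
  constructor
  · intro H
    have hrows : ∀ n, 1 ≤ n → Summable (fun k : ℕ => |α n (k+1)|) := by
      intro n hn
      have := (H (fun _ => 1) ⟨1, by norm_num⟩).1 n hn
      simp only [mul_one] at this
      exact summable_abs_iff.mpr this
    refine ⟨hrows, fun t ht => ?_⟩
    obtain ⟨C, htC⟩ := ht
    have hs : ∀ n, 1 ≤ n → Summable (fun k : ℕ => α n (k+1) * t (k+1)) :=
      fun n hn => summable_mul_bounded _ _ C (hrows n hn) (fun k => htC (k+1))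
    refine ⟨fun i _ => summable_bmat_row m' α t hs i, ?_⟩
    obtain ⟨M, hM⟩ := (H t ⟨C, htC⟩).2
    exact ⟨M, fun i => by rw [key_identity m' α t hs (i+1)]; exact hM (i+1)⟩
  · rintro ⟨hrows, hB⟩ t ⟨C, htC⟩
    have hs : ∀ n, 1 ≤ n → Summable (fun k : ℕ => α n (k+1) * t (k+1)) :=
      fun n hn => summable_mul_bounded _ _ C (hrows n hn) (fun k => htC (k+1))
    refine ⟨hs, ?_⟩
    obtain ⟨M, hM⟩ := (hB t ⟨C, htC⟩).2
    refine ⟨max M 0, fun i => ?_⟩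
    cases i with
    | zero => simp
    | succ j =>
        rw [← key_identity m' α t hs (j+1)]
        exact le_trans (hM j) (le_max_left _ _)
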